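/- Let A ∈ GL_n(ℂ) be a unipotent matrix (all eigenvalues equal to 1), and let J(A) be the number of Jordan blocks of A divided by n. Then J(A ⊗ A) ≤ J(A) and J(A ⊗ A) ≤ J(A)² + (1 - J(A))². -/

import Mathlib

open Matrix Kronecker Polynomial
open Module LinearMap

universe u v




section Abstract
variable {K : Type*} [Field K]

/-- The space of intertwiners from `g` to `f`. -/
def entw {V W : Type*} [AddCommGroup V] [Module K V] [AddCommGroup W] [Module K W]
    (f : Module.End K V) (g : Module.End K W) : Submodule K (W →ₗ[K] V) where
  carrier := {X | f ∘ₗ X = X ∘ₗ g}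
  add_mem' := by
    intro a b ha hb
    simp only [Set.mem_setOf_eq] at *
    rw [LinearMap.comp_add, LinearMap.add_comp, ha, hb]
  zero_mem' := by simp [Set.mem_setOf_eq]
  smul_mem' := by
    intro c X hX
    simp only [Set.mem_setOf_eq] at *
    rw [LinearMap.comp_smul, LinearMap.smul_comp, hX]

variable {V W V' W' : Type*} [AddCommGroup V] [Module K V] [AddCommGroup W] [Module K W]
  [AddCommGroup V'] [Module K V'] [AddCommGroup W'] [Module K W']

lemma mem_entw {f : Module.End K V} {g : Module.End K W} {X : W →ₗ[K] V} :
    X ∈ entw f g ↔ f ∘ₗ X = X ∘ₗ g := Iff.rfl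

lemma entw_apply {f : Module.End K V} {g : Module.End K W} (X : entw f g) (w : W) :
    f ((X : W →ₗ[K] V) w) = (X : W →ₗ[K] V) (g w) := by
  have h := congrArg (fun (Y : W →ₗ[K] V) => Y w) X.2
  simpa using h

lemma entw_maps_range {f : Module.End K V} {g : Module.End K W} (X : entw f g) :
    ∀ w ∈ range g, (X : W →ₗ[K] V) w ∈ range f := by
  rintro w ⟨u, rfl⟩
  exact ⟨(X : W →ₗ[K] V) u, entw_apply X u⟩

lemma entw_le_hom [FiniteDimensional K V] [FiniteDimensional K W]
    (f : Module.End K V) (g : Module.End K W) :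
    finrank K (entw f g) ≤ finrank K W * finrank K V := by
  calc finrank K (entw f g) ≤ finrank K (W →ₗ[K] V) := Submodule.finrank_le _
    _ = finrank K W * finrank K V := by rw [Module.finrank_linearMap]

/-- The key dimension-counting step. -/
theorem entw_step [FiniteDimensional K V] [FiniteDimensional K W]
    [FiniteDimensional K V'] [FiniteDimensional K W']
    (f : Module.End K V) (g : Module.End K W) (f' : Module.End K V') (g' : Module.End K W')
    (ι : V' →ₗ[K] V) (hι : Function.Injective ι) (hιr : range ι = range f)
    (κ : W' →ₗ[K] W) (hκr : range κ = range g)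
    (hf' : ι ∘ₗ f' = f ∘ₗ ι) (hg' : κ ∘ₗ g' = g ∘ₗ κ) :
    finrank K (entw f g) ≤ finrank K (ker f) * finrank K (ker g) +
      finrank K (entw f' g') := by
  classical
  have hι' : ∀ (y : V), y ∈ range ι → ∃ x, ι x = y := fun y hy => hy
  -- the lift of `X ∘ κ` through `ι`
  have hmem : ∀ (X : entw f g) (w : W'), ((X : W →ₗ[K] V) ∘ₗ κ) w ∈ range ι := by
    intro X w
    rw [hιr]
    exact entw_maps_range X _ (hκr ▸ ⟨w, rfl⟩)
  let ie : V' ≃ₗ[K] range ι := LinearEquiv.ofInjective ι hι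
  let lift : (entw f g) → (W' →ₗ[K] V') := fun X =>
    (ie.symm : range ι →ₗ[K] V') ∘ₗ
      (((X : W →ₗ[K] V) ∘ₗ κ).codRestrict (range ι) (hmem X))
  have hlift : ∀ (X : entw f g) (w : W'), ι (lift X w) = (X : W →ₗ[K] V) (κ w) := by
    intro X w
    show ι ((ie.symm ⟨((X : W →ₗ[K] V)) (κ w), hmem X w⟩ : V')) = _
    have key : ∀ (y : range ι), ι (ie.symm y) = y := by
      intro y
      conv_rhs => rw [← ie.apply_symm_apply y]
      exact (LinearEquiv.ofInjective_apply ι (ie.symm y)).symm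
    rw [key]
  have hliftmem : ∀ X : entw f g, lift X ∈ entw f' g' := by
    intro X
    rw [mem_entw]
    ext w
    apply hι
    have h1 : ι (f' (lift X w)) = f (ι (lift X w)) := LinearMap.congr_fun hf' _
    have h2 : κ (g' w) = g (κ w) := LinearMap.congr_fun hg' _
    simp only [LinearMap.comp_apply]
    rw [h1, hlift X w, hlift X (g' w), h2, entw_apply X (κ w)]
  let ρ : entw f g →ₗ[K] entw f' g' :=
    { toFun := fun X => ⟨lift X, hliftmem X⟩
      map_add' := fun X Y => by
        apply Subtype.ext
        ext w
        apply hι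
        simp only [Submodule.coe_add, LinearMap.add_apply]
        rw [_root_.map_add, hlift, hlift, hlift]
        simp
      map_smul' := fun c X => by
        apply Subtype.ext
        ext w
        apply hι
        simp only [Submodule.coe_smul, LinearMap.smul_apply, RingHom.id_apply]
        rw [_root_.map_smul, hlift, hlift]
        simp }
  have hρ_apply : ∀ (X : entw f g) (w : W'),
      ι (((ρ X : entw f' g') : W' →ₗ[K] V') w) = (X : W →ₗ[K] V) (κ w) := fun X w => hlift X w
  -- bound the kernel of ρ
  have hker : finrank K (ker ρ) ≤ finrank K (ker f) * finrank K (ker g) := by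
    have hkills : ∀ (Y : ker ρ), ∀ u ∈ range g, ((Y : entw f g) : W →ₗ[K] V) u = 0 := by
      intro Y u hu
      rw [← hκr] at hu
      obtain ⟨w, rfl⟩ := hu
      have h0 : ρ (Y : entw f g) = 0 := Y.2
      have := hρ_apply (Y : entw f g) w
      rw [h0] at this
      simpa using this.symm
    have hcod : ∀ (Y : ker ρ) (w : W), f (((Y : entw f g) : W →ₗ[K] V) w) = 0 := by
      intro Y w
      rw [entw_apply (Y : entw f g) w, hkills Y _ ⟨w, rfl⟩]
    let ψ : ker ρ →ₗ[K] ((W ⧸ range g) →ₗ[K] ker f) :=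
      { toFun := fun Y => (range g).liftQ
          (((Y : entw f g) : W →ₗ[K] V).codRestrict (ker f) (fun w => by
            rw [mem_ker]; exact hcod Y w))
          (fun u hu => by
            rw [mem_ker]
            apply Subtype.ext
            simpa using hkills Y u hu)
        map_add' := fun Y Z => by
          apply Submodule.linearMap_qext
          ext w
          simp
        map_smul' := fun c Y => by
          apply Submodule.linearMap_qext
          ext w
          simp }
    have hinj : Function.Injective ψ := by
      intro Y Z h
      apply Subtype.ext; apply Subtype.ext
      ext w
      have := congrArg (fun (q : (W ⧸ range g) →ₗ[K] ker f) =>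
        ((q (Submodule.Quotient.mk w)) : V)) h
      simpa [ψ, Submodule.liftQ_apply] using this
    have hq : finrank K (W ⧸ range g) = finrank K (ker g) := by
      have h1 := Submodule.finrank_quotient_add_finrank (range g)
      have h2 := LinearMap.finrank_range_add_finrank_ker g
      omega
    calc finrank K (ker ρ) ≤ finrank K ((W ⧸ range g) →ₗ[K] ker f) :=
          LinearMap.finrank_le_finrank_of_injective hinj
      _ = finrank K (W ⧸ range g) * finrank K (ker f) := by rw [Module.finrank_linearMap]
      _ = finrank K (ker f) * finrank K (ker g) := by rw [hq, mul_comm]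
  have hrn := LinearMap.finrank_range_add_finrank_ker ρ
  have hrange : finrank K (range ρ) ≤ finrank K (entw f' g') := Submodule.finrank_le _
  omega

end Abstract
section A2
variable {K : Type*} [Field K]

lemma range_inv {V : Type*} [AddCommGroup V] [Module K V] (f : Module.End K V) :
    ∀ x ∈ range f, f x ∈ range f := fun x _ => ⟨x, rfl⟩

lemma subtype_comp_restrict {V : Type*} [AddCommGroup V] [Module K V] (f : Module.End K V) :
    (range f).subtype ∘ₗ (f.restrict (range_inv f)) = f ∘ₗ (range f).subtype := by
  ext x
  simp [LinearMap.restrict_apply]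

lemma finrank_ker_restrict_le {V : Type*} [AddCommGroup V] [Module K V] [FiniteDimensional K V]
    (f : Module.End K V) :
    finrank K (ker (f.restrict (range_inv f))) ≤ finrank K (ker f) := by
  let ψ : ker (f.restrict (range_inv f)) →ₗ[K] ker f :=
    { toFun := fun x => ⟨((x : ↥(range f)) : V), by
        rw [mem_ker]
        have hx : f.restrict (range_inv f) (x : ↥(range f)) = 0 := x.2
        have h2 := congrArg Subtype.val hx
        rw [LinearMap.restrict_coe_apply] at h2
        simpa using h2⟩
      map_add' := fun x y => by apply Subtype.ext; rfl
      map_smul' := fun c x => by apply Subtype.ext; rfl }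
  have hinj : Function.Injective ψ := by
    intro x y h
    apply Subtype.ext; apply Subtype.ext
    exact congrArg (fun z : ↥(ker f) => (z : V)) h
  exact LinearMap.finrank_le_finrank_of_injective hinj

lemma restrict_nilpotent {W : Type*} [AddCommGroup W] [Module K W] {g : Module.End K W}
    (hg : IsNilpotent g) : IsNilpotent (g.restrict (range_inv g)) := by
  obtain ⟨k, hk⟩ := hg
  refine ⟨k, ?_⟩
  rw [Module.End.pow_restrict]
  ext x
  simp [LinearMap.restrict_coe_apply, hk]
end A2
section A3
variable {K : Type*} [Field K]

/-- Second main bound. -/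
theorem entw_le_sq {V W : Type*} [AddCommGroup V] [Module K V] [AddCommGroup W] [Module K W]
    [FiniteDimensional K V] [FiniteDimensional K W] (f : Module.End K V) (g : Module.End K W) :
    finrank K (entw f g) ≤ finrank K (ker f) * finrank K (ker g) +
      finrank K (range g) * finrank K (range f) := by
  have h := entw_step f g (f.restrict (range_inv f)) (g.restrict (range_inv g))
    (range f).subtype (Submodule.injective_subtype _) (Submodule.range_subtype _)
    (range g).subtype (Submodule.range_subtype _)
    (subtype_comp_restrict f) (subtype_comp_restrict g)
  refine h.trans (Nat.add_le_add_left ?_ _)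
  exact entw_le_hom _ _

/-- First main bound, by induction on the dimension. -/
theorem entw_le_mul_aux : ∀ (N : ℕ) (V : Type u) (W : Type v) [AddCommGroup V] [Module K V]
    [AddCommGroup W] [Module K W] [FiniteDimensional K V] [FiniteDimensional K W]
    (f : Module.End K V) (g : Module.End K W), IsNilpotent g → finrank K W ≤ N →
    finrank K (entw f g) ≤ finrank K (ker f) * finrank K W := by
  intro N
  induction N with
  | zero =>
    intro V W _ _ _ _ _ _ f g _ hW
    have h0 : finrank K W = 0 := Nat.le_zero.mp hW
    have := entw_le_hom f g
    rw [h0] at this ⊢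
    simpa using this
  | succ N ih =>
    intro V W _ _ _ _ _ _ f g hg hW
    by_cases h0 : finrank K W = 0
    · have := entw_le_hom f g
      rw [h0] at this ⊢
      simpa using this
    · have hstep := entw_step f g (f.restrict (range_inv f)) (g.restrict (range_inv g))
        (range f).subtype (Submodule.injective_subtype _) (Submodule.range_subtype _)
        (range g).subtype (Submodule.range_subtype _)
        (subtype_comp_restrict f) (subtype_comp_restrict g)
      have hnt : Nontrivial W := by
        exact Module.finrank_pos_iff.mp (Nat.pos_of_ne_zero h0)
      have hkgne : LinearMap.ker g ≠ ⊥ := by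
        obtain ⟨k, hk⟩ := hg
        intro hbot
        have hinj : Function.Injective g := ker_eq_bot.mp hbot
        have hinjk : Function.Injective (⇑(g ^ k)) := by
          rw [Module.End.coe_pow]; exact Function.Injective.iterate hinj k
        obtain ⟨x, y, hxy⟩ := hnt
        exact hxy (hinjk (by simp [hk]))
      have hkg : 0 < finrank K (ker g) := by
        rcases Nat.eq_zero_or_pos (finrank K (ker g)) with h | h
        · exact absurd (Submodule.finrank_eq_zero.mp h) hkgne
        · exact h
      have hrn := LinearMap.finrank_range_add_finrank_ker g
      have hrg : finrank K (range g) ≤ N := by omega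
      have hih := ih ↥(range f) ↥(range g) (f.restrict (range_inv f))
        (g.restrict (range_inv g)) (restrict_nilpotent hg) hrg
      have hkf' := finrank_ker_restrict_le f
      calc finrank K (entw f g)
          ≤ finrank K (ker f) * finrank K (ker g) +
            finrank K (entw (f.restrict (range_inv f)) (g.restrict (range_inv g))) := hstep
        _ ≤ finrank K (ker f) * finrank K (ker g) +
            finrank K (ker f) * finrank K (range g) := by
            refine Nat.add_le_add_left (hih.trans ?_) _
            exact Nat.mul_le_mul_right _ hkf'
        _ = finrank K (ker f) * (finrank K (ker g) + finrank K (range g)) := by ring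
        _ = finrank K (ker f) * finrank K W := by rw [Nat.add_comm, hrn]

theorem entw_le_mul {V : Type u} {W : Type v} [AddCommGroup V] [Module K V]
    [AddCommGroup W] [Module K W] [FiniteDimensional K V] [FiniteDimensional K W]
    (f : Module.End K V) (g : Module.End K W) (hg : IsNilpotent g) :
    finrank K (entw f g) ≤ finrank K (ker f) * finrank K W :=
  entw_le_mul_aux (finrank K W) V W f g hg le_rfl

end A3


/-- `Jfrac A` : for a unipotent matrix, the number of Jordan blocks (i.e. the geometric
multiplicity of the eigenvalue `1`) divided by the size of the matrix. -/
noncomputable def Jfrac {m : Type*} [Fintype m] [DecidableEq m] (A : Matrix m m ℂ) : ℝ :=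
  (Module.finrank ℂ (Module.End.eigenspace (Matrix.toLin' A) 1) : ℝ) / Fintype.card m

lemma eig_one_eq {m' : Type*} [Fintype m'] [DecidableEq m'] (M : Matrix m' m' ℂ) :
    Module.End.eigenspace (Matrix.toLin' M) 1 = LinearMap.ker (mulVecLin (M - 1)) := by
  ext x
  rw [Module.End.mem_eigenspace_iff, LinearMap.mem_ker]
  rw [Matrix.toLin'_apply, Matrix.mulVecLin_apply, one_smul, Matrix.sub_mulVec,
    Matrix.one_mulVec, sub_eq_zero]

lemma kron_mulVec {n : ℕ} (A B : Matrix (Fin n) (Fin n) ℂ) (v : Fin n × Fin n → ℂ) :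
    (A ⊗ₖ B) *ᵥ v = fun p => (A * (Matrix.of fun k l => v (k, l)) * Bᵀ) p.1 p.2 := by
  funext p
  obtain ⟨i, j⟩ := p
  simp only [Matrix.mulVec, dotProduct, Matrix.mul_apply, Matrix.kroneckerMap_apply,
    Matrix.transpose_apply, Matrix.of_apply, Fintype.sum_prod_type]
  rw [Finset.sum_comm]
  refine Finset.sum_congr rfl fun l _ => ?_
  rw [Finset.sum_mul]
  refine Finset.sum_congr rfl fun k _ => ?_
  ring

theorem Jfrac_kronecker_le {n : ℕ} (A : Matrix (Fin n) (Fin n) ℂ)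
    (hA : A.charpoly = (X - C 1) ^ n) :
    Jfrac (A ⊗ₖ A) ≤ Jfrac A ∧
      Jfrac (A ⊗ₖ A) ≤ Jfrac A ^ 2 + (1 - Jfrac A) ^ 2 := by
  classical
  -- Cayley–Hamilton: A is unipotent
  have hCH := Matrix.aeval_self_charpoly A
  rw [hA] at hCH
  have hnil : (A - 1) ^ n = 0 := by
    simpa [map_pow, map_sub, aeval_X, aeval_C] using hCH
  rcases Nat.eq_zero_or_pos n with h0 | hn
  · subst h0
    constructor <;> simp [Jfrac]
  -- invertibility
  have hu : IsUnit A := by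
    have h1 : IsNilpotent (A - 1) := ⟨n, hnil⟩
    have := h1.isUnit_add_right_of_commute isUnit_one (Commute.one_right _)
    simpa using this
  have hdet : IsUnit Aᵀ.det := by
    rw [Matrix.det_transpose]
    exact (Matrix.isUnit_iff_isUnit_det A).mp hu
  set B := (Aᵀ)⁻¹ with hB
  have hATB : Aᵀ * B = 1 := Matrix.mul_nonsing_inv _ hdet
  have hBAT : B * Aᵀ = 1 := Matrix.nonsing_inv_mul _ hdet
  have h5 : ((1 : Matrix (Fin n) (Fin n) ℂ) - Aᵀ) ^ n = 0 := by
    have h6 : (1 : Matrix (Fin n) (Fin n) ℂ) - Aᵀ = ((1 : Matrix (Fin n) (Fin n) ℂ) - A)ᵀ := by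
      rw [Matrix.transpose_sub, Matrix.transpose_one]
    have h7 : (1 : Matrix (Fin n) (Fin n) ℂ) - A = -(A - 1) := by rw [neg_sub]
    rw [h6, h7, ← Matrix.transpose_pow, neg_pow, hnil, mul_zero, Matrix.transpose_zero]
  have hB1 : B - 1 = B * (1 - Aᵀ) := by rw [Matrix.mul_sub, Matrix.mul_one, hBAT]
  have hcomm : Commute B ((1 : Matrix (Fin n) (Fin n) ℂ) - Aᵀ) := by
    have hc : Commute B Aᵀ := by
      show B * Aᵀ = Aᵀ * B
      rw [hBAT, hATB]
    exact (Commute.one_right B).sub_right hc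
  have hMnil : IsNilpotent (B - 1) := by
    rw [hB1]
    exact hcomm.isNilpotent_mul_left ⟨n, h5⟩
  -- the two endomorphisms
  set f : Module.End ℂ (Fin n → ℂ) := mulVecLin (A - 1) with hf
  set g : Module.End ℂ (Fin n → ℂ) := mulVecLin (B - 1) with hg
  have hgnil : IsNilpotent g := by
    obtain ⟨k, hk⟩ := hMnil
    refine ⟨k, ?_⟩
    have h8 : g = (Matrix.toLinAlgEquiv' (B - 1) : Module.End ℂ (Fin n → ℂ)) := by
      apply LinearMap.ext
      intro x
      rw [hg, Matrix.mulVecLin_apply, Matrix.toLinAlgEquiv'_apply]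
    rw [h8, ← map_pow, hk, map_zero]
  -- dimension bookkeeping
  set d1 := finrank ℂ (Module.End.eigenspace (Matrix.toLin' A) 1) with hd1
  set d2 := finrank ℂ (Module.End.eigenspace (Matrix.toLin' (A ⊗ₖ A)) 1) with hd2
  have hd1' : d1 = finrank ℂ (ker f) := by
    rw [hd1, eig_one_eq]
  have hcard : finrank ℂ (Fin n → ℂ) = n := by
    rw [Module.finrank_fintype_fun_eq_card, Fintype.card_fin]
  -- rank equality between B - 1 and A - 1
  have hrank : (B - 1).rank = (A - 1).rank := by
    rw [hB1, Matrix.rank_mul_eq_right_of_isUnit_det B (1 - Aᵀ)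
      (Matrix.isUnit_nonsing_inv_det Aᵀ hdet)]
    have h6 : (1 : Matrix (Fin n) (Fin n) ℂ) - Aᵀ = ((1 : Matrix (Fin n) (Fin n) ℂ) - A)ᵀ := by
      rw [Matrix.transpose_sub, Matrix.transpose_one]
    rw [h6, Matrix.rank_transpose]
    have h7 : (1 : Matrix (Fin n) (Fin n) ℂ) - A = (-1) * (A - 1) := by
      rw [neg_one_mul, neg_sub]
    rw [h7, Matrix.rank_mul_eq_right_of_isUnit_det (-1) (A - 1)]
    rw [Matrix.det_neg, Matrix.det_one, mul_one]
    exact (isUnit_one.neg).pow _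
  have hrank' : finrank ℂ (range g) = finrank ℂ (range f) := hrank
  have hrnf := LinearMap.finrank_range_add_finrank_ker f
  have hrng := LinearMap.finrank_range_add_finrank_ker g
  rw [hcard] at hrnf hrng
  rw [← hd1'] at hrnf
  have hkg : finrank ℂ (ker g) = d1 := by omega
  have hrf : finrank ℂ (range f) = n - d1 := by omega
  have hrg : finrank ℂ (range g) = n - d1 := by omega
  have hd1n : d1 ≤ n := by omega
  -- identify the kronecker eigenspace with the intertwiner space
  have hd2' : d2 = finrank ℂ (entw f g) := by
    rw [hd2, eig_one_eq]
    set e1 : (Fin n × Fin n → ℂ) ≃ₗ[ℂ] Matrix (Fin n) (Fin n) ℂ :=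
      LinearEquiv.curry ℂ ℂ (Fin n) (Fin n) with he1
    set e : (Fin n × Fin n → ℂ) ≃ₗ[ℂ] Module.End ℂ (Fin n → ℂ) :=
      e1.trans Matrix.toLin' with he
    have hkercomap : ker (mulVecLin ((A ⊗ₖ A) - 1)) =
        Submodule.comap (e : (Fin n × Fin n → ℂ) →ₗ[ℂ] Module.End ℂ (Fin n → ℂ)) (entw f g) := by
      ext v
      rw [LinearMap.mem_ker, Submodule.mem_comap]
      have hc : (e : (Fin n × Fin n → ℂ) →ₗ[ℂ] Module.End ℂ (Fin n → ℂ)) v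
          = Matrix.toLin' (e1 v) := rfl
      rw [hc, mem_entw]
      set Xm : Matrix (Fin n) (Fin n) ℂ := e1 v with hX
      have hXv : Xm = Matrix.of fun k l => v (k, l) := rfl
      have step1 : mulVecLin ((A ⊗ₖ A) - 1) v = 0 ↔ A * Xm * Aᵀ = Xm := by
        rw [Matrix.mulVecLin_apply, Matrix.sub_mulVec, Matrix.one_mulVec, sub_eq_zero,
          kron_mulVec, hXv]
        constructor
        · intro h
          ext i j
          exact congrFun h (i, j)
        · intro h
          funext p
          rw [h]
          rfl
      have step2 : (A * Xm * Aᵀ = Xm) ↔ (A - 1) * Xm = Xm * (B - 1) := by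
        constructor
        · intro h
          have h9 : A * Xm = Xm * B := by
            have h10 := congrArg (fun Y => Y * B) h
            simpa only [Matrix.mul_assoc, hATB, Matrix.mul_one] using h10
          rw [Matrix.sub_mul, Matrix.mul_sub, Matrix.one_mul, Matrix.mul_one, h9]
        · intro h
          have h9 : A * Xm = Xm * B := by
            rw [Matrix.sub_mul, Matrix.mul_sub, Matrix.one_mul, Matrix.mul_one] at h
            exact sub_left_inj.mp h
          calc A * Xm * Aᵀ = Xm * B * Aᵀ := by rw [h9]
            _ = Xm * (B * Aᵀ) := by rw [Matrix.mul_assoc]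
            _ = Xm := by rw [hBAT, Matrix.mul_one]
      have step3 : ((A - 1) * Xm = Xm * (B - 1)) ↔ f ∘ₗ Matrix.toLin' Xm = Matrix.toLin' Xm ∘ₗ g := by
        rw [hf, hg, ← Matrix.toLin'_apply' (A - 1), ← Matrix.toLin'_apply' (B - 1)]
        rw [← Matrix.toLin'_mul, ← Matrix.toLin'_mul]
        exact ⟨fun h => by rw [h], fun h => Matrix.toLin'.injective h⟩
      rw [step1, step2, step3]
    rw [hkercomap]
    exact LinearEquiv.finrank_eq (LinearEquiv.ofSubmodule' e (entw f g))
  -- the two natural number inequalities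
  have key1 : d2 ≤ d1 * n := by
    rw [hd2', hd1']
    have := entw_le_mul f g hgnil
    rwa [hcard] at this
  have key2 : d2 ≤ d1 * d1 + (n - d1) * (n - d1) := by
    rw [hd2']
    have := entw_le_sq f g
    rw [hkg, hrf, hrg, ← hd1'] at this
    exact this
  -- final real arithmetic
  have hJA : Jfrac A = (d1 : ℝ) / n := by
    unfold Jfrac
    rw [← hd1, Fintype.card_fin]
  have hJAA : Jfrac (A ⊗ₖ A) = (d2 : ℝ) / (n * n) := by
    unfold Jfrac
    rw [← hd2, Fintype.card_prod, Fintype.card_fin]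
    norm_num
  have hnpos : (0 : ℝ) < n := by exact_mod_cast hn
  have hc1 : (d2 : ℝ) ≤ d1 * n := by exact_mod_cast key1
  have hc2 : (d2 : ℝ) ≤ d1 * d1 + ((n : ℝ) - d1) * ((n : ℝ) - d1) := by
    have := (Nat.cast_le (α := ℝ)).mpr key2
    push_cast [Nat.cast_sub hd1n] at this
    convert this using 2 <;> push_cast [Nat.cast_sub hd1n] <;> ring
  have hd1r : (d1 : ℝ) ≤ n := by exact_mod_cast hd1n
  constructor
  · rw [hJA, hJAA, div_le_div_iff₀ (by positivity) hnpos]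
    nlinarith
  · rw [hJA, hJAA]
    have expand : ((d1 : ℝ) / n) ^ 2 + (1 - (d1 : ℝ) / n) ^ 2
        = ((d1 : ℝ) * d1 + ((n : ℝ) - d1) * ((n : ℝ) - d1)) / (n * n) := by
      field_simp
    rw [expand, div_le_div_iff₀ (by positivity) (by positivity)]
    have hnn : (0:ℝ) ≤ (n : ℝ) * (n : ℝ) := by positivity
    linarith [mul_le_mul_of_nonneg_right hc2 hnn]
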